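/- Let K ≥ 1 and 1/2 < p₂ ≤ p₁ be real numbers, and let V̄ : (0,∞) → ℝ be a measurable locally bounded function such that y^(2p₂) ≤ exp(2·V̄(y)) ≤ y^(2p₁) for all y ≥ K. Then for every ξ ≥ K, v¹(ξ) := 2·∫_K^ξ exp(2·V̄(y₁)) · ( ∫_{y₁}^∞ exp(−2·V̄(y₂)) dy₂ ) dy₁ is finite and satisfies v¹(ξ) ≤ C·ξ^(2(p₁−p₂)+2), where C = 1/((2p₂−1)·(p₁−p₂+1)). -/

import Mathlib

open MeasureTheory

/-- Under `y^(2p₂) ≤ exp(2·V̄(y)) ≤ y^(2p₁)` for `y ≥ K` (with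
`K ≥ 1`, `1/2 < p₂ ≤ p₁`, `V̄` measurable and locally bounded on `(0,∞)`),
for every `ξ ≥ K` the quantity
`v¹(ξ) = 2·∫_K^ξ e^{2V̄(y₁)} (∫_{y₁}^∞ e^{−2V̄(y₂)} dy₂) dy₁`
is finite (all integrals involved converge) and satisfies
`v¹(ξ) ≤ C·ξ^(2(p₁−p₂)+2)` with `C = 1/((2p₂−1)(p₁−p₂+1))`. -/
theorem first_moment_bound
    (K p₁ p₂ : ℝ) (hK : 1 ≤ K) (hp₂ : 1 / 2 < p₂) (hp : p₂ ≤ p₁)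
    (Vbar : ℝ → ℝ) (hmeas : Measurable Vbar)
    (hloc : ∀ a b : ℝ, 0 < a → ∃ M : ℝ, ∀ y ∈ Set.Icc a b, |Vbar y| ≤ M)
    (hlb : ∀ y : ℝ, K ≤ y → y ^ (2 * p₂) ≤ Real.exp (2 * Vbar y))
    (hub : ∀ y : ℝ, K ≤ y → Real.exp (2 * Vbar y) ≤ y ^ (2 * p₁))
    (ξ : ℝ) (hξ : K ≤ ξ) :
    (∀ y₁ : ℝ, K ≤ y₁ →
        IntegrableOn (fun y₂ => Real.exp (-(2 * Vbar y₂))) (Set.Ioi y₁)) ∧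
      IntervalIntegrable
        (fun y₁ => Real.exp (2 * Vbar y₁) *
          ∫ y₂ in Set.Ioi y₁, Real.exp (-(2 * Vbar y₂))) volume K ξ ∧
      2 * ∫ y₁ in K..ξ, Real.exp (2 * Vbar y₁) *
          ∫ y₂ in Set.Ioi y₁, Real.exp (-(2 * Vbar y₂)) ≤
        (1 / ((2 * p₂ - 1) * (p₁ - p₂ + 1))) * ξ ^ (2 * (p₁ - p₂) + 2) := by
  have hK0 : (0:ℝ) < K := lt_of_lt_of_le one_pos hK
  have hs1 : (1:ℝ) < 2 * p₂ := by linarith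
  set a : ℝ := 2 * (p₁ - p₂) + 1 with ha
  have ha0 : (0:ℝ) < a := by simp only [ha]; linarith
  have hCpos : 0 < (2 * p₂ - 1) * (p₁ - p₂ + 1) := by
    apply mul_pos <;> linarith
  -- pointwise bound on the inner integrand
  have hptw : ∀ y : ℝ, K ≤ y → Real.exp (-(2 * Vbar y)) ≤ y ^ (-(2 * p₂)) := by
    intro y hy
    have hy0 : 0 < y := lt_of_lt_of_le hK0 hy
    rw [Real.exp_neg, Real.rpow_neg hy0.le]
    exact inv_anti₀ (Real.rpow_pos_of_pos hy0 _) (hlb y hy)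
  -- part 1 : integrability of inner integrand
  have hint : ∀ y₁ : ℝ, K ≤ y₁ →
      IntegrableOn (fun y₂ => Real.exp (-(2 * Vbar y₂))) (Set.Ioi y₁) := by
    intro y₁ hy₁
    have hy₁0 : 0 < y₁ := lt_of_lt_of_le hK0 hy₁
    have hdom : IntegrableOn (fun y : ℝ => y ^ (-(2 * p₂))) (Set.Ioi y₁) :=
      integrableOn_Ioi_rpow_of_lt (by linarith) hy₁0
    refine hdom.mono' ?_ ?_
    · exact (((hmeas.const_mul 2).neg).exp).aestronglyMeasurable
    · filter_upwards [ae_restrict_mem measurableSet_Ioi] with y hy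
      rw [Real.norm_eq_abs, abs_of_pos (Real.exp_pos _)]
      exact hptw y (hy₁.trans hy.le)
  refine ⟨hint, ?_⟩
  set F : ℝ → ℝ := fun y₁ => ∫ y₂ in Set.Ioi y₁, Real.exp (-(2 * Vbar y₂)) with hF
  have hFnonneg : ∀ y₁ : ℝ, 0 ≤ F y₁ := fun y₁ =>
    setIntegral_nonneg measurableSet_Ioi (fun y _ => (Real.exp_pos _).le)
  -- bound on the inner integral
  have hinner : ∀ y₁ : ℝ, K ≤ y₁ → F y₁ ≤ y₁ ^ (1 - 2 * p₂) / (2 * p₂ - 1) := by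
    intro y₁ hy₁
    have hy₁0 : 0 < y₁ := lt_of_lt_of_le hK0 hy₁
    have h2 : (∫ y in Set.Ioi y₁, y ^ (-(2 * p₂)))
        = -y₁ ^ (-(2 * p₂) + 1) / (-(2 * p₂) + 1) :=
      integral_Ioi_rpow_of_lt (by linarith) hy₁0
    have h3 : F y₁ ≤ ∫ y in Set.Ioi y₁, y ^ (-(2 * p₂)) := by
      refine setIntegral_mono_on (hint y₁ hy₁)
        (integrableOn_Ioi_rpow_of_lt (by linarith) hy₁0) measurableSet_Ioi ?_
      intro y hy
      exact hptw y (hy₁.trans (le_of_lt hy))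
    rw [h2] at h3
    have he : (-(2 * p₂) + 1) = -(2 * p₂ - 1) := by ring
    calc F y₁ ≤ -y₁ ^ (-(2 * p₂) + 1) / (-(2 * p₂) + 1) := h3
      _ = y₁ ^ (1 - 2 * p₂) / (2 * p₂ - 1) := by
          rw [show (-(2 * p₂) + 1 : ℝ) = 1 - 2 * p₂ by ring]
          rw [show (1 - 2 * p₂ : ℝ) = -(2 * p₂ - 1) by ring, neg_div_neg_eq]
  -- bound on the outer integrand
  have houter : ∀ y₁ : ℝ, K ≤ y₁ → y₁ ≤ ξ →
      Real.exp (2 * Vbar y₁) * F y₁ ≤ ξ ^ a / (2 * p₂ - 1) := by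
    intro y₁ hy₁ hy₁ξ
    have hy₁0 : 0 < y₁ := lt_of_lt_of_le hK0 hy₁
    have h1 : Real.exp (2 * Vbar y₁) * F y₁
        ≤ y₁ ^ (2 * p₁) * (y₁ ^ (1 - 2 * p₂) / (2 * p₂ - 1)) := by
      apply mul_le_mul (hub y₁ hy₁) (hinner y₁ hy₁) (hFnonneg y₁)
      positivity
    have h2 : y₁ ^ (2 * p₁) * (y₁ ^ (1 - 2 * p₂) / (2 * p₂ - 1))
        = y₁ ^ a / (2 * p₂ - 1) := by
      rw [mul_div_assoc', ← Real.rpow_add hy₁0]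
      norm_num [ha]
      ring_nf
    have h3 : y₁ ^ a ≤ ξ ^ a :=
      Real.rpow_le_rpow hy₁0.le hy₁ξ ha0.le
    calc Real.exp (2 * Vbar y₁) * F y₁ ≤ y₁ ^ a / (2 * p₂ - 1) := by rw [← h2]; exact h1
      _ ≤ ξ ^ a / (2 * p₂ - 1) := by
          apply div_le_div_of_nonneg_right h3
          linarith
  -- measurability of F on [K, ξ]
  have hanti : AntitoneOn F (Set.Icc K ξ) := by
    intro x hx y hy hxy
    exact setIntegral_mono_set (hint x hx.1)
      (Filter.Eventually.of_forall fun z => (Real.exp_pos _).le)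
      (Filter.Eventually.of_forall (Set.Ioi_subset_Ioi hxy))
  have hFmeas : AEMeasurable F (volume.restrict (Set.Ioc K ξ)) :=
    (aemeasurable_restrict_of_antitoneOn measurableSet_Icc hanti).mono_measure
      (Measure.restrict_mono Set.Ioc_subset_Icc_self le_rfl)
  have hGmeas : AEStronglyMeasurable
      (fun y₁ => Real.exp (2 * Vbar y₁) * F y₁) (volume.restrict (Set.Ioc K ξ)) :=
    (((hmeas.const_mul 2).exp.aemeasurable.restrict).mul hFmeas).aestronglyMeasurable
  -- part 2 : interval integrability of the outer integrand
  have hintouter : IntegrableOn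
      (fun y₁ => Real.exp (2 * Vbar y₁) * F y₁) (Set.Ioc K ξ) := by
    refine Integrable.mono' (g := fun _ => ξ ^ a / (2 * p₂ - 1))
      (integrable_const _) hGmeas ?_
    filter_upwards [ae_restrict_mem measurableSet_Ioc] with y hy
    rw [Real.norm_eq_abs, abs_of_nonneg (mul_nonneg (Real.exp_pos _).le (hFnonneg y))]
    exact houter y hy.1.le hy.2
  have hII : IntervalIntegrable
      (fun y₁ => Real.exp (2 * Vbar y₁) * F y₁) volume K ξ :=
    (intervalIntegrable_iff_integrableOn_Ioc_of_le hξ).mpr hintouter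
  refine ⟨hII, ?_⟩
  -- the comparison function
  have hgII : IntervalIntegrable (fun y : ℝ => y ^ a / (2 * p₂ - 1)) volume K ξ := by
    apply ContinuousOn.intervalIntegrable
    apply ContinuousOn.div_const
    apply ContinuousOn.rpow_const continuousOn_id
    intro x hx
    rw [Set.uIcc_of_le hξ] at hx
    exact Or.inl (ne_of_gt (lt_of_lt_of_le hK0 hx.1))
  have hmono : ∫ y₁ in K..ξ, Real.exp (2 * Vbar y₁) * F y₁
      ≤ ∫ y₁ in K..ξ, y₁ ^ a / (2 * p₂ - 1) := by
    apply intervalIntegral.integral_mono_on hξ hII hgII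
    intro y hy
    have hy0 : (0:ℝ) < y := lt_of_lt_of_le hK0 hy.1
    have h1 : Real.exp (2 * Vbar y) * F y
        ≤ y ^ (2 * p₁) * (y ^ (1 - 2 * p₂) / (2 * p₂ - 1)) := by
      apply mul_le_mul (hub y hy.1) (hinner y hy.1) (hFnonneg y)
      exact Real.rpow_nonneg hy0.le _
    have h2 : y ^ (2 * p₁) * (y ^ (1 - 2 * p₂) / (2 * p₂ - 1))
        = y ^ a / (2 * p₂ - 1) := by
      rw [mul_div_assoc', ← Real.rpow_add hy0]
      norm_num [ha]
      ring_nf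
    linarith [h1, h2.symm.le]
  have hval : ∫ y₁ in K..ξ, y₁ ^ a / (2 * p₂ - 1)
      = ((ξ ^ (a + 1) - K ^ (a + 1)) / (a + 1)) / (2 * p₂ - 1) := by
    rw [intervalIntegral.integral_div, integral_rpow (Or.inl (by linarith : (-1:ℝ) < a))]
  have hKpow : 0 ≤ K ^ (a + 1) := Real.rpow_nonneg hK0.le _
  have hfin : 2 * (((ξ ^ (a + 1) - K ^ (a + 1)) / (a + 1)) / (2 * p₂ - 1))
      ≤ (1 / ((2 * p₂ - 1) * (p₁ - p₂ + 1))) * ξ ^ (a + 1) := by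
    have h2p : (0:ℝ) < 2 * p₂ - 1 := by linarith
    have hpp : (0:ℝ) < p₁ - p₂ + 1 := by linarith
    have ha1 : (0:ℝ) < a + 1 := by linarith
    have hD : 0 < (a + 1) * (2 * p₂ - 1) := mul_pos ha1 h2p
    have hC : (1 / ((2 * p₂ - 1) * (p₁ - p₂ + 1))) = 2 / ((a + 1) * (2 * p₂ - 1)) := by
      rw [ha]
      rw [div_eq_div_iff hCpos.ne' hD.ne']
      ring
    rw [hC, div_div, mul_div_assoc', div_mul_eq_mul_div]
    apply div_le_div_of_nonneg_right _ hD.le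
    nlinarith [hKpow]
  have hexp : a + 1 = 2 * (p₁ - p₂) + 2 := by rw [ha]; ring
  calc 2 * ∫ y₁ in K..ξ, Real.exp (2 * Vbar y₁) * F y₁
      ≤ 2 * (((ξ ^ (a + 1) - K ^ (a + 1)) / (a + 1)) / (2 * p₂ - 1)) := by
        rw [← hval]; linarith
    _ ≤ (1 / ((2 * p₂ - 1) * (p₁ - p₂ + 1))) * ξ ^ (a + 1) := hfin
    _ = (1 / ((2 * p₂ - 1) * (p₁ - p₂ + 1))) * ξ ^ (2 * (p₁ - p₂) + 2) := by rw [hexp]
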